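/- The lower bound of the virtual value function is achieved by the 'sufficient statistic' extractor E*(x) = q(·|x): with this choice, H(y|E*(x)) = H(y|x) and H(z | E*(x), q_y(·|E*(x))) = H(z | q_y(·|E*(x))). -/

import Mathlib

open Finset

/-- Probability of the event `f x = t` under the joint pmf `q` on `X × Z`. -/
noncomputable def fiberPr {X Z T : Type*} [Fintype X] [Fintype Z] [DecidableEq T]
    (q : X × Z → ℝ) (f : X → T) (t : T) : ℝ :=
  ∑ x, ∑ z, if f x = t then q (x, z) else 0

/-- Conditional pmf of `z` given the event `f x = t`. -/
noncomputable def fiberCond {X Z T : Type*} [Fintype X] [Fintype Z] [DecidableEq T]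
    (q : X × Z → ℝ) (f : X → T) (t : T) (z : Z) : ℝ :=
  (∑ x, if f x = t then q (x, z) else 0) / fiberPr q f t

/-- Conditional Shannon entropy `H(z | f(x))` for the joint pmf `q` on `X × Z`. -/
noncomputable def condEnt {X Z T : Type*} [Fintype X] [Fintype Z] [DecidableEq T]
    (q : X × Z → ℝ) (f : X → T) : ℝ :=
  ∑ t ∈ Finset.image f Finset.univ,
    fiberPr q f t *
      ∑ z, fiberCond q f t z * (-Real.log (fiberCond q f t z))

lemma condEnt_comp_inj {X Z T T' : Type*} [Fintype X] [Fintype Z] [DecidableEq T]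
    [DecidableEq T'] (q : X × Z → ℝ) (g : X → T) (j : T → T')
    (hj : Function.Injective j) :
    condEnt q (fun x => j (g x)) = condEnt q g := by
  have hpr : ∀ t, fiberPr q (fun x => j (g x)) (j t) = fiberPr q g t := by
    intro t; unfold fiberPr; simp [hj.eq_iff]
  have hc : ∀ t z, fiberCond q (fun x => j (g x)) (j t) z = fiberCond q g t z := by
    intro t z; unfold fiberCond; rw [hpr]; simp [hj.eq_iff]
  unfold condEnt
  have himg : Finset.image (fun x => j (g x)) Finset.univ
      = Finset.image j (Finset.image g Finset.univ) := by
    rw [Finset.image_image]; rfl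
  rw [himg, Finset.sum_image (fun a _ b _ h => hj h)]
  refine Finset.sum_congr rfl fun t _ => ?_
  rw [hpr]
  congr 1
  exact Finset.sum_congr rfl fun z _ => by rw [hc]

/-- The lower bound of the virtual value function is achieved by the
sufficient-statistic extractor `E*(x) = q(·|x)`:
`H(y|E*(x)) = H(y|x)` and
`H(z | E*(x), q_y(·|E*(x))) = H(z | q_y(·|E*(x)))`. -/
theorem optimal_extractor_achieves_bound
    {X Y Z : Type*} [Fintype X] [Fintype Y] [Fintype Z]
    [Nonempty X] [Nonempty Y] [Nonempty Z]
    [DecidableEq X] [DecidableEq (Y → ℝ)]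
    (q : X × Y × Z → ℝ) (hq0 : ∀ p, 0 ≤ q p) (hq1 : ∑ p, q p = 1)
    (qXY : X × Y → ℝ) (hqXY : ∀ x y, qXY (x, y) = ∑ z, q (x, y, z))
    (qXZ : X × Z → ℝ) (hqXZ : ∀ x z, qXZ (x, z) = ∑ y, q (x, y, z))
    (hpos : ∀ x, 0 < ∑ y, qXY (x, y))
    (Estar : X → (Y → ℝ))
    (hEstar : ∀ x, Estar x = fun y => qXY (x, y) / ∑ y', qXY (x, y'))
    (ψ : X → (Y → ℝ))
    (hψ : ∀ x, ψ x = fiberCond qXY Estar (Estar x)) :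
    condEnt qXY Estar = condEnt qXY (id : X → X) ∧
    condEnt qXZ (fun x => (Estar x, ψ x)) = condEnt qXZ ψ := by
  set p : X → ℝ := fun x => ∑ y, qXY (x, y) with hp
  have hpne : ∀ x, p x ≠ 0 := fun x => (hpos x).ne'
  have hqnn : ∀ x y, 0 ≤ qXY (x, y) := by
    intro x y; rw [hqXY]; exact Finset.sum_nonneg fun z _ => hq0 _
  have hqE : ∀ x y, qXY (x, y) = Estar x y * p x := by
    intro x y; rw [hEstar]
    exact (div_mul_cancel₀ _ (hpne x)).symm
  -- fiberPr for Estar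
  have hPr : ∀ t, fiberPr qXY Estar t = ∑ x, if Estar x = t then p x else 0 := by
    intro t; unfold fiberPr
    exact Finset.sum_congr rfl fun x _ => by split <;> simp [hp]
  have hPrpos : ∀ t ∈ Finset.image Estar Finset.univ, 0 < fiberPr qXY Estar t := by
    intro t ht
    obtain ⟨x0, _, hx0⟩ := Finset.mem_image.mp ht
    rw [hPr]
    refine Finset.sum_pos' (fun x _ => ?_) ⟨x0, Finset.mem_univ _, ?_⟩
    · split
      · exact (hpos _).le
      · exact le_refl 0
    · simpa [hx0] using hpos x0
  -- fiberCond for Estar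
  have hCond : ∀ t ∈ Finset.image Estar Finset.univ, ∀ y,
      fiberCond qXY Estar t y = t y := by
    intro t ht y
    unfold fiberCond
    have hnum : (∑ x, if Estar x = t then qXY (x, y) else 0)
        = t y * fiberPr qXY Estar t := by
      rw [hPr, Finset.mul_sum]
      refine Finset.sum_congr rfl fun x _ => ?_
      split
      · rename_i h; rw [hqE x y, h]
      · ring
    rw [hnum]
    field_simp [(hPrpos t ht).ne']
  constructor
  · -- part 1
    have hid : condEnt qXY (id : X → X) = ∑ x, p x *
        ∑ y, Estar x y * (-Real.log (Estar x y)) := by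
      unfold condEnt
      rw [Finset.image_id]
      refine Finset.sum_congr rfl fun x _ => ?_
      have hprid : fiberPr qXY (id : X → X) x = p x := by
        unfold fiberPr
        rw [Finset.sum_comm]
        simp [hp]
      have hcid : ∀ y, fiberCond qXY (id : X → X) x y = Estar x y := by
        intro y
        unfold fiberCond
        rw [hprid, hEstar]
        simp [hp]
      rw [hprid]
      congr 1
      exact Finset.sum_congr rfl fun y _ => by rw [hcid]
    rw [hid]
    unfold condEnt
    rw [Finset.sum_image' (fun x => p x * ∑ y, Estar x y * (-Real.log (Estar x y)))]
    intro c _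
    have hmem : Estar c ∈ Finset.image Estar Finset.univ :=
      Finset.mem_image_of_mem _ (Finset.mem_univ c)
    have hfilter : fiberPr qXY Estar (Estar c)
        = ∑ x ∈ Finset.univ.filter (fun x => Estar x = Estar c), p x := by
      rw [hPr, Finset.sum_filter]
    rw [hfilter, Finset.sum_mul]
    refine Finset.sum_congr rfl fun x hx => ?_
    have hxe : Estar x = Estar c := (Finset.mem_filter.mp hx).2
    congr 1
    · rw [hxe]
      refine Finset.sum_congr rfl fun y _ => ?_
      rw [hCond _ hmem y]
  · -- part 2
    have hψE : ψ = Estar := by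
      funext x y
      rw [hψ, hCond (Estar x) (Finset.mem_image_of_mem _ (Finset.mem_univ x)) y]
    have : (fun x => (Estar x, ψ x)) = fun x => ((fun t => (t, t)) (ψ x)) := by
      funext x; rw [hψE]
    rw [this]
    exact condEnt_comp_inj qXZ ψ (fun t => (t, t))
      (fun a b h => (Prod.mk.injEq _ _ _ _ ▸ h).1)
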